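/- arXiv:2406.09699 — 4 statements merged into one kernel-verified Lean document; each statement's English description precedes it below -/
import Mathlib

section
/- Let θ ∈ ℝ and let L : ℂ → ℂ be complex differentiable (holomorphic) on an open ball of ℂ centered at θ, and suppose L maps real points of this ball to real values. Let g : ℝ → ℝ denote the restriction of L to the reals (g(x) = Re L(x) for real x). Then there exist constants C > 0 and ε₀ > 0 such that for all ε with 0 < ε < ε₀, |Im(L(θ + iε))/ε − g'(θ)| ≤ C ε²; that is, the complex-step quotient Im(L(θ + iε))/ε approximates the real derivative with second-order accuracy O(ε²). -/
open Complex Metric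

/-- If a function is complex differentiable at a real point and is real-valued on real
points near it, then its derivative at that point is real. -/
lemma deriv_im_eq_zero_of_real {G : ℂ → ℂ} {x : ℝ}
    (hG : DifferentiableAt ℂ G (x : ℂ))
    (h0 : ∀ᶠ t : ℝ in nhds x, (G t).im = 0) :
    (deriv G (x : ℂ)).im = 0 := by
  have h1 : HasDerivAt G (deriv G (x : ℂ)) (x : ℂ) := hG.hasDerivAt
  have h2 : HasDerivAt (fun t : ℝ => G t) (deriv G (x : ℂ)) x := h1.comp_ofReal
  have h3 : HasDerivAt (fun t : ℝ => (G t).im) (deriv G (x : ℂ)).im x := by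
    exact (Complex.imCLM.hasFDerivAt.comp_hasDerivAt x h2)
  have h4 : deriv (fun t : ℝ => (G t).im) x = (deriv G (x : ℂ)).im := h3.deriv
  have h5 : (fun t : ℝ => (G t).im) =ᶠ[nhds x] (fun _ => (0 : ℝ)) := h0
  rw [← h4, h5.deriv_eq, deriv_const]

/-- Complex-step differentiation: if `L : ℂ → ℂ` is holomorphic on a ball around a real
point `θ` and maps real points of that ball to real values, then the complex-step quotient
`Im(L(θ + iε))/ε` approximates the derivative of the real restriction `g(x) = Re L(x)`
with second-order accuracy `O(ε²)`. -/
theorem complex_step_differentiation_second_order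
    (θ : ℝ) (L : ℂ → ℂ) (r : ℝ) (hr : 0 < r)
    (hL : DifferentiableOn ℂ L (Metric.ball (θ : ℂ) r))
    (hreal : ∀ x : ℝ, (x : ℂ) ∈ Metric.ball (θ : ℂ) r → (L x).im = 0) :
    ∃ C > (0 : ℝ), ∃ ε₀ > (0 : ℝ), ∀ ε : ℝ, 0 < ε → ε < ε₀ →
      |(L (θ + ε * Complex.I)).im / ε - deriv (fun x : ℝ => (L x).re) θ| ≤ C * ε ^ 2 := by
  have hopen : IsOpen (Metric.ball (θ : ℂ) r) := Metric.isOpen_ball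
  have hθmem : (θ : ℂ) ∈ Metric.ball (θ : ℂ) r := by simpa using hr
  have hnhds : Metric.ball (θ : ℂ) r ∈ nhds (θ : ℂ) := hopen.mem_nhds hθmem
  -- real points near a real point of the ball are in the ball
  have hrealnhds : ∀ x : ℝ, (x : ℂ) ∈ Metric.ball (θ : ℂ) r →
      ∀ᶠ t : ℝ in nhds x, ((t : ℂ) ∈ Metric.ball (θ : ℂ) r) := by
    intro x hx
    have hc : Continuous (fun t : ℝ => (t : ℂ)) := Complex.continuous_ofReal
    exact hc.continuousAt.preimage_mem_nhds (hopen.mem_nhds hx)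
  -- analyticity
  have hAn : AnalyticOnNhd ℂ L (Metric.ball (θ : ℂ) r) := hL.analyticOnNhd hopen
  have hAn' : AnalyticOnNhd ℂ (deriv L) (Metric.ball (θ : ℂ) r) := hAn.deriv
  -- deriv L is real on real points of the ball
  have hd1 : ∀ x : ℝ, (x : ℂ) ∈ Metric.ball (θ : ℂ) r → (deriv L (x : ℂ)).im = 0 := by
    intro x hx
    refine deriv_im_eq_zero_of_real ((hAn _ hx).differentiableAt) ?_
    filter_upwards [hrealnhds x hx] with t ht using hreal t ht
  -- deriv (deriv L) is real at θ
  have hd2 : (deriv (deriv L) (θ : ℂ)).im = 0 := by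
    refine deriv_im_eq_zero_of_real ((hAn' _ hθmem).differentiableAt) ?_
    filter_upwards [hrealnhds θ hθmem] with t ht using hd1 t ht
  -- power series at θ
  obtain ⟨p, hp⟩ : AnalyticAt ℂ L (θ : ℂ) := hAn _ hθmem
  -- coefficient facts
  have hc0 : (p.coeff 0).im = 0 := by
    obtain ⟨R, hR⟩ := hp
    have := hR.coeff_zero (fun _ => 1)
    rw [show p.coeff 0 = p 0 (fun _ => 1) from rfl, this]
    exact hreal θ hθmem
  have hc1 : (p.coeff 1) = deriv L (θ : ℂ) := by
    rw [hp.deriv]; rfl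
  have hc2 : (p.coeff 2).im = 0 := by
    obtain ⟨R, hR⟩ := hp
    have h := hR.factorial_smul (1 : ℂ) 2
    have him : (iteratedDeriv 2 L (θ : ℂ)).im = 0 := by
      rw [iteratedDeriv_succ, iteratedDeriv_one]
      exact hd2
    have h2 : (Nat.factorial 2) • (p.coeff 2) = iteratedDeriv 2 L (θ : ℂ) := by
      rw [show p.coeff 2 = p 2 (fun _ => (1 : ℂ)) from rfl]; exact h
    have h3 : ((Nat.factorial 2 : ℕ) : ℝ) * (p.coeff 2).im = 0 := by
      have := congrArg Complex.im h2
      simp only [nsmul_eq_mul] at this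
      have him2 := this.trans him
      simpa [Complex.mul_im] using him2
    have hne : ((Nat.factorial 2 : ℕ) : ℝ) ≠ 0 := by positivity
    rcases mul_eq_zero.1 h3 with h | h
    · exact absurd h hne
    · exact h
  -- derivative of the real restriction
  have hgderiv : deriv (fun x : ℝ => (L x).re) θ = (p.coeff 1).re := by
    have h1 : HasDerivAt L (deriv L (θ : ℂ)) (θ : ℂ) := ((hAn _ hθmem).differentiableAt).hasDerivAt
    have h2 := h1.real_of_complex
    rw [h2.deriv, hc1]
  -- Taylor bound
  have hbig := hp.isBigO_sub_partialSum_pow 3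
  rw [Asymptotics.isBigO_iff] at hbig
  obtain ⟨C, hC⟩ := hbig
  rw [Metric.eventually_nhds_iff] at hC
  obtain ⟨δ, hδ, hCδ⟩ := hC
  refine ⟨max C 1, lt_of_lt_of_le one_pos (le_max_right _ _), min δ 1, lt_min hδ one_pos, ?_⟩
  intro ε hε hεδ
  have hεδ' : ε < δ := lt_of_lt_of_le hεδ (min_le_left _ _)
  have hy : dist ((ε : ℂ) * Complex.I) 0 < δ := by
    simpa [Complex.norm_real, abs_of_pos hε] using hεδ'
  have hbound := hCδ hy
  have hnorm : ‖(ε : ℂ) * Complex.I‖ = ε := by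
    simp [Complex.norm_real, abs_of_pos hε]
  rw [hnorm] at hbound
  -- compute the partial sum
  have hps : p.partialSum 3 ((ε : ℂ) * Complex.I)
      = p.coeff 0 + ((ε : ℂ) * Complex.I) * p.coeff 1
        + ((ε : ℂ) * Complex.I) ^ 2 * p.coeff 2 := by
    simp [FormalMultilinearSeries.partialSum, Finset.sum_range_succ,
      FormalMultilinearSeries.apply_eq_pow_smul_coeff, smul_eq_mul]
    try ring
  have hpsim : (p.partialSum 3 ((ε : ℂ) * Complex.I)).im = ε * (p.coeff 1).re := by
    rw [hps]
    have h2 : (((ε : ℂ) * Complex.I) ^ 2) = -((ε ^ 2 : ℝ) : ℂ) := by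
      rw [mul_pow, Complex.I_sq]; push_cast; ring
    rw [h2]
    have h3 : (-((ε ^ 2 : ℝ) : ℂ) * p.coeff 2).im = 0 := by
      simp only [neg_mul, Complex.neg_im, Complex.mul_im, Complex.ofReal_re,
        Complex.ofReal_im, hc2, mul_zero, zero_mul, add_zero, neg_zero]
    rw [Complex.add_im, Complex.add_im, h3, hc0, Complex.mul_im]
    simp
    try ring
  have hkey : |(L ((θ : ℂ) + (ε : ℂ) * Complex.I)).im - ε * (p.coeff 1).re| ≤ C * ε ^ 3 := by
    calc |(L ((θ : ℂ) + (ε : ℂ) * Complex.I)).im - ε * (p.coeff 1).re|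
        = |(L ((θ : ℂ) + (ε : ℂ) * Complex.I) - p.partialSum 3 ((ε : ℂ) * Complex.I)).im| := by
          rw [Complex.sub_im, hpsim]
      _ ≤ ‖L ((θ : ℂ) + (ε : ℂ) * Complex.I) - p.partialSum 3 ((ε : ℂ) * Complex.I)‖ :=
          Complex.abs_im_le_norm _
      _ ≤ C * ε ^ 3 := by simpa [abs_of_pos hε] using hbound
  rw [hgderiv]
  have hεne : ε ≠ 0 := ne_of_gt hε
  have : |(L ((θ : ℂ) + (ε : ℂ) * Complex.I)).im / ε - (p.coeff 1).re|
      = |(L ((θ : ℂ) + (ε : ℂ) * Complex.I)).im - ε * (p.coeff 1).re| / ε := by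
    rw [show (L ((θ : ℂ) + (ε : ℂ) * Complex.I)).im / ε - (p.coeff 1).re
        = ((L ((θ : ℂ) + (ε : ℂ) * Complex.I)).im - ε * (p.coeff 1).re) / ε by field_simp,
      abs_div, abs_of_pos hε]
  rw [show ((θ : ℂ) + (ε : ℂ) * Complex.I) = ((θ : ℝ) : ℂ) + (ε : ℝ) * Complex.I from rfl] at *
  rw [this]
  rw [div_le_iff₀ hε]
  calc |(L ((θ : ℂ) + (ε : ℂ) * Complex.I)).im - ε * (p.coeff 1).re| ≤ C * ε ^ 3 := hkey
    _ ≤ max C 1 * ε ^ 2 * ε := by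
        have : C ≤ max C 1 := le_max_left _ _
        nlinarith [pow_pos hε 2, pow_pos hε 3]
end

section
/- Let f : ℝ^n × ℝ^p × ℝ → ℝ^n and h : ℝ^n × ℝ^p → ℝ be continuously differentiable. Fix θ ∈ ℝ^p, let u : [t₀, t₁] → ℝ^n be continuously differentiable with u'(t) = f(u(t), θ, t), let s : [t₀, t₁] → ℝ^{n×p} be continuously differentiable with s'(t) = (∂f/∂u)(u(t), θ, t) s(t) + (∂f/∂θ)(u(t), θ, t), and let the adjoint λ : [t₀, t₁] → ℝ^n be continuously differentiable with dλ/dt = −(∂f/∂u)(u(t), θ, t)ᵀ λ(t) − (∂h/∂u)(u(t), θ)ᵀ and final condition λ(t₁) = 0. Then ∫_{t₀}^{t₁} (∂h/∂u)(u(t), θ) s(t) dt = λ(t₀)ᵀ s(t₀) + ∫_{t₀}^{t₁} λ(t)ᵀ (∂f/∂θ)(u(t), θ, t) dt. In particular, if L(θ) = ∫_{t₀}^{t₁} h(u(t; θ), θ) dt is differentiable at θ with dL/dθ = ∫_{t₀}^{t₁} ( ∂h/∂θ + (∂h/∂u) s(t) ) dt (differentiation under the integral sign), then dL/dθ = λ(t₀)ᵀ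 s(t₀) + ∫_{t₀}^{t₁} ( ∂h/∂θ + λ(t)ᵀ ∂f/∂θ ) dt. -/
open Matrix

/-- The continuous adjoint method: if `u` solves `u' = f(u, θ, t)`, the sensitivity `s`
solves the forward sensitivity equation, and the adjoint `λ` solves
`λ' = −(∂f/∂u)ᵀ λ − (∂h/∂u)ᵀ` with `λ(t₁) = 0`, then
`∫ (∂h/∂u) s dt = λ(t₀)ᵀ s(t₀) + ∫ λᵀ (∂f/∂θ) dt`; in particular, if
`dL/dθ = ∫ (∂h/∂θ + (∂h/∂u) s) dt` then
`dL/dθ = λ(t₀)ᵀ s(t₀) + ∫ (∂h/∂θ + λᵀ ∂f/∂θ) dt`. -/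
theorem continuous_adjoint_gradient
    (n p : ℕ) (t₀ t₁ : ℝ) (h01 : t₀ ≤ t₁)
    (f : (Fin n → ℝ) → (Fin p → ℝ) → ℝ → (Fin n → ℝ))
    (h : (Fin n → ℝ) → (Fin p → ℝ) → ℝ) (θ : Fin p → ℝ)
    (hf : ContDiff ℝ 1 (fun q : (Fin n → ℝ) × (Fin p → ℝ) × ℝ => f q.1 q.2.1 q.2.2))
    (hh : ContDiff ℝ 1 (fun q : (Fin n → ℝ) × (Fin p → ℝ) => h q.1 q.2))
    (u : ℝ → Fin n → ℝ)
    (hu : ∀ t ∈ Set.Icc t₀ t₁, HasDerivAt u (f (u t) θ t) t)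
    -- `A t` is the partial Jacobian `∂f/∂u (u(t), θ, t)`
    (A : ℝ → Matrix (Fin n) (Fin n) ℝ)
    (hA : ∀ t ∈ Set.Icc t₀ t₁, ∀ v, A t *ᵥ v = fderiv ℝ (fun w => f w θ t) (u t) v)
    -- `B t` is the partial Jacobian `∂f/∂θ (u(t), θ, t)`
    (B : ℝ → Matrix (Fin n) (Fin p) ℝ)
    (hB : ∀ t ∈ Set.Icc t₀ t₁, ∀ v, B t *ᵥ v = fderiv ℝ (fun w => f (u t) w t) θ v)
    -- `g t` is the gradient row vector `∂h/∂u (u(t), θ)`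
    (g : ℝ → Fin n → ℝ)
    (hg : ∀ t ∈ Set.Icc t₀ t₁, ∀ i,
      g t i = fderiv ℝ (fun w => h w θ) (u t) (Pi.single i 1 : Fin n → ℝ))
    -- `gθ t` is the gradient row vector `∂h/∂θ (u(t), θ)`
    (gθ : ℝ → Fin p → ℝ)
    (hgθ : ∀ t ∈ Set.Icc t₀ t₁, ∀ j,
      gθ t j = fderiv ℝ (fun w => h (u t) w) θ (Pi.single j 1 : Fin p → ℝ))
    -- the sensitivity `s` solves the forward sensitivity equation
    (s : ℝ → Matrix (Fin n) (Fin p) ℝ)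
    (hs : ∀ t ∈ Set.Icc t₀ t₁, ∀ i j, HasDerivAt (fun τ => s τ i j) ((A t * s t + B t) i j) t)
    -- the adjoint `λ` solves `λ' = −(∂f/∂u)ᵀ λ − (∂h/∂u)ᵀ`, `λ(t₁) = 0`
    (lam : ℝ → Fin n → ℝ)
    (hlam : ∀ t ∈ Set.Icc t₀ t₁, HasDerivAt lam (-((A t)ᵀ *ᵥ lam t) - g t) t)
    (hlam1 : lam t₁ = 0) :
    (∫ t in t₀..t₁, g t ᵥ* s t)
        = lam t₀ ᵥ* s t₀ + ∫ t in t₀..t₁, lam t ᵥ* B t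
      ∧ ∀ dL : Fin p → ℝ,
          dL = (∫ t in t₀..t₁, (gθ t + g t ᵥ* s t)) →
          dL = lam t₀ ᵥ* s t₀ + ∫ t in t₀..t₁, (gθ t + lam t ᵥ* B t) := by
  classical
  set F : (Fin n → ℝ) × (Fin p → ℝ) × ℝ → (Fin n → ℝ) :=
    fun q => f q.1 q.2.1 q.2.2 with hF
  set H : (Fin n → ℝ) × (Fin p → ℝ) → ℝ := fun q => h q.1 q.2 with hH
  -- continuity of u, lam, s on Icc
  have hucont : ContinuousOn u (Set.Icc t₀ t₁) :=
    fun t ht => (hu t ht).continuousAt.continuousWithinAt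
  have hlamcont : ContinuousOn lam (Set.Icc t₀ t₁) :=
    fun t ht => (hlam t ht).continuousAt.continuousWithinAt
  have hscont : ∀ i j, ContinuousOn (fun t => s t i j) (Set.Icc t₀ t₁) :=
    fun i j t ht => (hs t ht i j).continuousAt.continuousWithinAt
  have hcurve : ContinuousOn (fun t => ((u t, θ, t) : (Fin n → ℝ) × (Fin p → ℝ) × ℝ))
      (Set.Icc t₀ t₁) := hucont.prodMk (continuousOn_const.prodMk continuousOn_id)
  have hcurve2 : ContinuousOn (fun t => ((u t, θ) : (Fin n → ℝ) × (Fin p → ℝ)))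
      (Set.Icc t₀ t₁) := hucont.prodMk continuousOn_const
  have hDF : Continuous (fderiv ℝ F) := hf.continuous_fderiv one_ne_zero
  have hDH : Continuous (fderiv ℝ H) := hh.continuous_fderiv one_ne_zero
  -- B entries via full fderiv
  have hBval : ∀ t ∈ Set.Icc t₀ t₁, ∀ i j,
      B t i j = fderiv ℝ F (u t, θ, t) (0, Pi.single j 1, 0) i := by
    intro t ht i j
    have h1 : HasFDerivAt (fun w : Fin p → ℝ => ((u t, w, t) : (Fin n → ℝ) × (Fin p → ℝ) × ℝ))
        ((0 : (Fin p → ℝ) →L[ℝ] (Fin n → ℝ)).prod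
          ((ContinuousLinearMap.id ℝ (Fin p → ℝ)).prod 0)) θ :=
      HasFDerivAt.prodMk (hasFDerivAt_const _ _) (HasFDerivAt.prodMk (hasFDerivAt_id _) (hasFDerivAt_const _ _))
    have h2 := ((hf.differentiable one_ne_zero) (u t, θ, t)).hasFDerivAt
    have h3 : HasFDerivAt (fun w => f (u t) w t)
        ((fderiv ℝ F (u t, θ, t)).comp ((0 : (Fin p → ℝ) →L[ℝ] (Fin n → ℝ)).prod
          ((ContinuousLinearMap.id ℝ (Fin p → ℝ)).prod 0))) θ := by
      have := h2.comp θ h1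
      exact this
    have h4 := hB t ht (Pi.single j 1)
    rw [h3.fderiv] at h4
    have h5 := congrFun h4 i
    rw [Matrix.mulVec_single] at h5
    simpa using h5
  have hgval : ∀ t ∈ Set.Icc t₀ t₁, ∀ i,
      g t i = fderiv ℝ H (u t, θ) (Pi.single i 1, 0) := by
    intro t ht i
    have h1 : HasFDerivAt (fun w : Fin n → ℝ => ((w, θ) : (Fin n → ℝ) × (Fin p → ℝ)))
        ((ContinuousLinearMap.id ℝ (Fin n → ℝ)).prod 0) (u t) :=
      HasFDerivAt.prodMk (hasFDerivAt_id _) (hasFDerivAt_const _ _)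
    have h2 := ((hh.differentiable one_ne_zero) (u t, θ)).hasFDerivAt
    have h3 : HasFDerivAt (fun w => h w θ)
        ((fderiv ℝ H (u t, θ)).comp ((ContinuousLinearMap.id ℝ (Fin n → ℝ)).prod 0)) (u t) :=
      HasFDerivAt.comp (u t) (g := H) h2 h1
    rw [hg t ht i, h3.fderiv]
    rfl
  have hgθval : ∀ t ∈ Set.Icc t₀ t₁, ∀ j,
      gθ t j = fderiv ℝ H (u t, θ) (0, Pi.single j 1) := by
    intro t ht j
    have h1 : HasFDerivAt (fun w : Fin p → ℝ => ((u t, w) : (Fin n → ℝ) × (Fin p → ℝ)))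
        ((0 : (Fin p → ℝ) →L[ℝ] (Fin n → ℝ)).prod (ContinuousLinearMap.id ℝ (Fin p → ℝ))) θ :=
      HasFDerivAt.prodMk (hasFDerivAt_const _ _) (hasFDerivAt_id _)
    have h2 := ((hh.differentiable one_ne_zero) (u t, θ)).hasFDerivAt
    have h3 : HasFDerivAt (fun w => h (u t) w)
        ((fderiv ℝ H (u t, θ)).comp ((0 : (Fin p → ℝ) →L[ℝ] (Fin n → ℝ)).prod
          (ContinuousLinearMap.id ℝ (Fin p → ℝ)))) θ := h2.comp θ h1
    rw [hgθ t ht j, h3.fderiv]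
    rfl
  -- continuity of entries
  have hBcont : ∀ i j, ContinuousOn (fun t => B t i j) (Set.Icc t₀ t₁) := by
    intro i j
    have : ContinuousOn (fun t => fderiv ℝ F (u t, θ, t) (0, Pi.single j 1, 0) i)
        (Set.Icc t₀ t₁) :=
      (continuous_apply i).comp_continuousOn
        (((hDF.comp_continuousOn hcurve).clm_apply continuousOn_const))
    exact this.congr (fun t ht => hBval t ht i j)
  have hgcont : ∀ i, ContinuousOn (fun t => g t i) (Set.Icc t₀ t₁) := by
    intro i
    exact (((hDH.comp_continuousOn hcurve2).clm_apply continuousOn_const)).congr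
      (fun t ht => hgval t ht i)
  have hgθcont : ∀ j, ContinuousOn (fun t => gθ t j) (Set.Icc t₀ t₁) := by
    intro j
    exact (((hDH.comp_continuousOn hcurve2).clm_apply continuousOn_const)).congr
      (fun t ht => hgθval t ht j)
  -- continuity of integrands
  have hcont1 : ContinuousOn (fun t => g t ᵥ* s t) (Set.Icc t₀ t₁) := by
    apply continuousOn_pi.2
    intro j
    have : ContinuousOn (fun t => ∑ i, g t i * s t i j) (Set.Icc t₀ t₁) :=
      continuousOn_finset_sum _ (fun i _ => (hgcont i).mul (hscont i j))
    exact this.congr (fun t ht => by simp [Matrix.vecMul, dotProduct])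
  have hcont2 : ContinuousOn (fun t => lam t ᵥ* B t) (Set.Icc t₀ t₁) := by
    apply continuousOn_pi.2
    intro j
    have hl : ∀ i : Fin n, ContinuousOn (fun t => lam t i) (Set.Icc t₀ t₁) :=
      fun i => (continuous_apply i).comp_continuousOn hlamcont
    have : ContinuousOn (fun t => ∑ i, lam t i * B t i j) (Set.Icc t₀ t₁) :=
      continuousOn_finset_sum _ (fun i _ => (hl i).mul (hBcont i j))
    exact this.congr (fun t ht => by simp [Matrix.vecMul, dotProduct])
  have hcont3 : ContinuousOn gθ (Set.Icc t₀ t₁) :=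
    continuousOn_pi.2 hgθcont
  have huIcc : Set.uIcc t₀ t₁ = Set.Icc t₀ t₁ := Set.uIcc_of_le h01
  have i1 : IntervalIntegrable (fun t => g t ᵥ* s t) MeasureTheory.volume t₀ t₁ :=
    (huIcc ▸ hcont1).intervalIntegrable
  have i2 : IntervalIntegrable (fun t => lam t ᵥ* B t) MeasureTheory.volume t₀ t₁ :=
    (huIcc ▸ hcont2).intervalIntegrable
  have i3 : IntervalIntegrable gθ MeasureTheory.volume t₀ t₁ :=
    (huIcc ▸ hcont3).intervalIntegrable
  -- derivative of φ = lam ᵥ* s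
  have hφ : ∀ t ∈ Set.Icc t₀ t₁,
      HasDerivAt (fun τ => lam τ ᵥ* s τ) (lam t ᵥ* B t - g t ᵥ* s t) t := by
    intro t ht
    rw [hasDerivAt_pi]
    intro j
    have hlamc := hasDerivAt_pi.1 (hlam t ht)
    have hsum : HasDerivAt (fun τ => ∑ i, lam τ i * s τ i j)
        (∑ i, ((-((A t)ᵀ *ᵥ lam t) - g t) i * s t i j + lam t i * (A t * s t + B t) i j)) t :=
      HasDerivAt.fun_sum (fun i _ => (hlamc i).mul (hs t ht i j))
    have hfun : (fun τ => (lam τ ᵥ* s τ) j) = fun τ => ∑ i, lam τ i * s τ i j := by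
      funext τ; simp [Matrix.vecMul, dotProduct]
    rw [hfun]
    refine hsum.congr_deriv ?_
    symm
    have cancel : ∑ i, ((A t)ᵀ *ᵥ lam t) i * s t i j = ∑ i, lam t i * (A t * s t) i j := by
      simp only [Matrix.mulVec, Matrix.mul_apply, Matrix.transpose_apply, dotProduct,
        Finset.sum_mul, Finset.mul_sum]
      rw [Finset.sum_comm]
      exact Finset.sum_congr rfl fun k _ => Finset.sum_congr rfl fun i _ => by ring
    have expand : ∀ i : Fin n,
        (-((A t)ᵀ *ᵥ lam t) - g t) i * s t i j + lam t i * (A t * s t + B t) i j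
        = (lam t i * B t i j - g t i * s t i j)
          + (lam t i * (A t * s t) i j - ((A t)ᵀ *ᵥ lam t) i * s t i j) := by
      intro i
      simp only [Pi.sub_apply, Pi.neg_apply, Matrix.add_apply]
      ring
    rw [Finset.sum_congr rfl (fun i _ => expand i), Finset.sum_add_distrib,
      Finset.sum_sub_distrib, Finset.sum_sub_distrib, cancel]
    simp [Matrix.vecMul, dotProduct, Finset.sum_sub_distrib]
  have hkey : (∫ t in t₀..t₁, (lam t ᵥ* B t - g t ᵥ* s t))
      = lam t₁ ᵥ* s t₁ - lam t₀ ᵥ* s t₀ := by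
    apply intervalIntegral.integral_eq_sub_of_hasDerivAt
    · intro t ht; exact hφ t (huIcc ▸ ht)
    · exact (huIcc ▸ (hcont2.sub hcont1)).intervalIntegrable
  rw [intervalIntegral.integral_sub i2 i1, hlam1, Matrix.zero_vecMul, zero_sub] at hkey
  have main : (∫ t in t₀..t₁, g t ᵥ* s t)
      = lam t₀ ᵥ* s t₀ + ∫ t in t₀..t₁, lam t ᵥ* B t := by
    have := hkey
    linear_combination -this
  refine ⟨main, ?_⟩
  intro dL hdL
  rw [hdL, intervalIntegral.integral_add i3 i1, intervalIntegral.integral_add i3 i2, main]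
  abel
end

section
/- Let g_m : ℝ^n × ℝ^p → ℝ^n for m = 0, …, M−1 be differentiable maps, fix an initial state u⁰ ∈ ℝ^n, and for θ ∈ ℝ^p define iterates u^{m+1}(θ) = g_m(u^m(θ), θ) with u^0(θ) = u⁰. Let L : (ℝ^n)^M → ℝ be differentiable as a function of (u¹, …, u^M). Define adjoint vectors backward by λ_M = (∂L/∂u^M)ᵀ and λ_m = (∂g_m/∂u)(u^m(θ), θ)ᵀ λ_{m+1} + (∂L/∂u^m)ᵀ for m = M−1, …, 1, with partial derivatives of L evaluated at (u¹(θ), …, u^M(θ)). Then θ ↦ L(u¹(θ), …, u^M(θ)) is differentiable and its gradient equals Σ_{m=0}^{M−1} (∂g_m/∂θ)(u^m(θ), θ)ᵀ λ_{m+1}; i.e., the reverse-mode (discrete adjoint / backpropagation) recursion computes the exact gradient of the loss through an explicit one-step scheme. -/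
open Matrix

/-- The iterates `u⁰ , u^{m+1} = g_m(u^m, θ)` of an explicit one-step scheme. -/
def solverIterate (n p : ℕ) (g : ℕ → (Fin n → ℝ) → (Fin p → ℝ) → (Fin n → ℝ))
    (u0 : Fin n → ℝ) (θ : Fin p → ℝ) : ℕ → (Fin n → ℝ)
  | 0 => u0
  | (m + 1) => g m (solverIterate n p g u0 θ m) θ

/-- Expanding a dot product with a linear map through the standard basis. -/
theorem dot_clm_expand (n : ℕ) (A : (Fin n → ℝ) →L[ℝ] (Fin n → ℝ)) (lam w : Fin n → ℝ) :
    lam ⬝ᵥ A w = ∑ i, w i * (lam ⬝ᵥ A (Pi.single i 1)) := by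
  have hw : A w = ∑ i, w i • A (Pi.single i 1) := by
    conv_lhs => rw [← Finset.univ_sum_single w]
    rw [map_sum]
    refine Finset.sum_congr rfl fun i _ => ?_
    have h : Pi.single i (w i) = w i • (Pi.single i 1 : Fin n → ℝ) := by
      rw [← Pi.single_smul, smul_eq_mul, mul_one]
    rw [h, _root_.map_smul]
  rw [hw]
  simp only [dotProduct, Finset.sum_apply, Pi.smul_apply, smul_eq_mul, Finset.mul_sum]
  rw [Finset.sum_comm]
  exact Finset.sum_congr rfl fun i _ => Finset.sum_congr rfl fun j _ => by ring

/-- The abstract adjoint telescoping identity. -/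
theorem adjoint_telescope (n M : ℕ)
    (lam ell v b : ℕ → (Fin n → ℝ))
    (A : ℕ → ((Fin n → ℝ) →L[ℝ] (Fin n → ℝ)))
    (hv0 : v 0 = 0)
    (hvrec : ∀ m, m < M → v (m + 1) = A m (v m) + b m)
    (hlrec : ∀ k, k + 1 < M → ∀ i,
      lam k i = lam (k + 1) ⬝ᵥ A (k + 1) (Pi.single i 1) + ell k i) :
    ∀ k, k < M →
      lam k ⬝ᵥ v (k + 1) + ∑ m ∈ Finset.range k, ell m ⬝ᵥ v (m + 1)
        = ∑ m ∈ Finset.range (k + 1), lam m ⬝ᵥ b m := by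
  have hdotA : ∀ k, k + 1 < M → ∀ w : Fin n → ℝ,
      lam k ⬝ᵥ w = lam (k + 1) ⬝ᵥ (A (k + 1) w) + ell k ⬝ᵥ w := by
    intro k hk w
    rw [dot_clm_expand n (A (k + 1)) (lam (k + 1)) w]
    have h1 : lam k ⬝ᵥ w = ∑ i, lam k i * w i := rfl
    have h2 : ell k ⬝ᵥ w = ∑ i, ell k i * w i := rfl
    rw [h1, h2, ← Finset.sum_add_distrib]
    refine Finset.sum_congr rfl fun i _ => ?_
    rw [hlrec k hk i]
    ring
  intro k
  induction k with
  | zero =>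
    intro hk
    have hv1 : v 1 = b 0 := by rw [hvrec 0 hk, hv0, map_zero, zero_add]
    simp [hv1]
  | succ k ih =>
    intro hk
    have h1 : v (k + 2) = A (k + 1) (v (k + 1)) + b (k + 1) := hvrec (k + 1) hk
    have h2 : lam (k + 1) ⬝ᵥ v (k + 2)
        = lam (k + 1) ⬝ᵥ A (k + 1) (v (k + 1)) + lam (k + 1) ⬝ᵥ b (k + 1) := by
      rw [h1, dotProduct_add]
    have h3 : lam k ⬝ᵥ v (k + 1)
        = lam (k + 1) ⬝ᵥ A (k + 1) (v (k + 1)) + ell k ⬝ᵥ v (k + 1) := hdotA k hk _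
    have h4 := ih (by omega)
    rw [Finset.sum_range_succ, Finset.sum_range_succ (f := fun m => lam m ⬝ᵥ b m) (n := k + 1)]
    linarith

/-- Differentiability of the solver iterates in the parameter. -/
theorem solver_diff (n p M : ℕ) (g : ℕ → (Fin n → ℝ) → (Fin p → ℝ) → (Fin n → ℝ))
    (u0 : Fin n → ℝ)
    (hg : ∀ m < M, Differentiable ℝ (fun q : (Fin n → ℝ) × (Fin p → ℝ) => g m q.1 q.2)) :
    ∀ m, m ≤ M → Differentiable ℝ (fun θ' => solverIterate n p g u0 θ' m) := by
  intro m
  induction m with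
  | zero => intro _; simp only [solverIterate]; exact differentiable_const u0
  | succ k ih =>
    intro hk
    have hk' : k < M := hk
    have h1 := ih (le_of_lt hk')
    have h2 : Differentiable ℝ (fun θ' : Fin p → ℝ =>
        (fun q : (Fin n → ℝ) × (Fin p → ℝ) => g k q.1 q.2)
          (solverIterate n p g u0 θ' k, θ')) :=
      (hg k hk').comp (h1.prodMk differentiable_id)
    simpa [solverIterate] using h2

/-- The chain rule for one step of the scheme, split into the two partial derivatives. -/
theorem solver_fderiv_rec (n p M : ℕ) (g : ℕ → (Fin n → ℝ) → (Fin p → ℝ) → (Fin n → ℝ))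
    (u0 : Fin n → ℝ) (θ : Fin p → ℝ)
    (hg : ∀ m < M, Differentiable ℝ (fun q : (Fin n → ℝ) × (Fin p → ℝ) => g m q.1 q.2))
    (m : ℕ) (hm : m < M) (e : Fin p → ℝ) :
    fderiv ℝ (fun θ' => solverIterate n p g u0 θ' (m + 1)) θ e
      = fderiv ℝ (fun v => g m v θ) (solverIterate n p g u0 θ m)
          (fderiv ℝ (fun θ' => solverIterate n p g u0 θ' m) θ e)
        + fderiv ℝ (fun t => g m (solverIterate n p g u0 θ m) t) θ e := by
  have hdm := (solver_diff n p M g u0 hg m (le_of_lt hm)) θ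
  have hSm : HasFDerivAt (fun θ' => solverIterate n p g u0 θ' m)
      (fderiv ℝ (fun θ' => solverIterate n p g u0 θ' m) θ) θ := hdm.hasFDerivAt
  have hpair : HasFDerivAt (fun θ' : Fin p → ℝ => (solverIterate n p g u0 θ' m, θ'))
      ((fderiv ℝ (fun θ' => solverIterate n p g u0 θ' m) θ).prod
        (ContinuousLinearMap.id ℝ (Fin p → ℝ))) θ :=
    hSm.prodMk (hasFDerivAt_id θ)
  set um := solverIterate n p g u0 θ m with hum
  have hGd : HasFDerivAt (fun q : (Fin n → ℝ) × (Fin p → ℝ) => g m q.1 q.2)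
      (fderiv ℝ (fun q : (Fin n → ℝ) × (Fin p → ℝ) => g m q.1 q.2) (um, θ)) (um, θ) :=
    ((hg m hm) (um, θ)).hasFDerivAt
  have hcomp : HasFDerivAt (fun θ' => g m (solverIterate n p g u0 θ' m) θ')
      ((fderiv ℝ (fun q : (Fin n → ℝ) × (Fin p → ℝ) => g m q.1 q.2) (um, θ)).comp
        ((fderiv ℝ (fun θ' => solverIterate n p g u0 θ' m) θ).prod
          (ContinuousLinearMap.id ℝ (Fin p → ℝ)))) θ := by
    exact HasFDerivAt.comp (f := fun θ' : Fin p → ℝ => (solverIterate n p g u0 θ' m, θ'))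
      θ hGd hpair
  have hAeq : fderiv ℝ (fun v => g m v θ) um
      = (fderiv ℝ (fun q : (Fin n → ℝ) × (Fin p → ℝ) => g m q.1 q.2) (um, θ)).comp
          (ContinuousLinearMap.inl ℝ (Fin n → ℝ) (Fin p → ℝ)) :=
    by have h := hGd.comp um (hasFDerivAt_prodMk_left (𝕜 := ℝ) um θ); exact h.fderiv
  have hBeq : fderiv ℝ (fun t => g m um t) θ
      = (fderiv ℝ (fun q : (Fin n → ℝ) × (Fin p → ℝ) => g m q.1 q.2) (um, θ)).comp
          (ContinuousLinearMap.inr ℝ (Fin n → ℝ) (Fin p → ℝ)) :=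
    (hGd.comp θ (hasFDerivAt_prodMk_right um θ)).fderiv
  have hmain : fderiv ℝ (fun θ' => solverIterate n p g u0 θ' (m + 1)) θ
      = (fderiv ℝ (fun q : (Fin n → ℝ) × (Fin p → ℝ) => g m q.1 q.2) (um, θ)).comp
        ((fderiv ℝ (fun θ' => solverIterate n p g u0 θ' m) θ).prod
          (ContinuousLinearMap.id ℝ (Fin p → ℝ))) := by
    have heq : (fun θ' => solverIterate n p g u0 θ' (m + 1))
        = fun θ' => g m (solverIterate n p g u0 θ' m) θ' := by
      funext θ'; simp [solverIterate]
    rw [heq]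
    exact hcomp.fderiv
  rw [hmain, hAeq, hBeq]
  simp only [ContinuousLinearMap.comp_apply, ContinuousLinearMap.prod_apply,
    ContinuousLinearMap.id_apply, ContinuousLinearMap.inl_apply, ContinuousLinearMap.inr_apply]
  rw [← map_add]
  congr 1
  simp [Prod.ext_iff]

/-- Decomposing a derivative of `L` through the standard basis of `(Fin M → Fin n → ℝ)`. -/
theorem fderiv_L_expand (n M : ℕ) (L : (Fin M → Fin n → ℝ) → ℝ) (pt w : Fin M → Fin n → ℝ) :
    fderiv ℝ L pt w
      = ∑ k : Fin M, ∑ i, w k i * fderiv ℝ L pt (Pi.single k (Pi.single i 1)) := by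
  have hsingle : ∀ (k : Fin M) (x : Fin n → ℝ),
      (Pi.single k x : Fin M → Fin n → ℝ) = ∑ i, x i • (Pi.single k (Pi.single i 1 : Fin n → ℝ) : Fin M → Fin n → ℝ) := by
    intro k x
    funext j
    by_cases h : j = k
    · subst h
      funext i
      simp [Finset.sum_apply, Pi.smul_apply, Pi.single_eq_same, smul_eq_mul,
        Pi.single_apply, mul_ite, mul_one, mul_zero, Finset.sum_ite_eq]
    · simp [Pi.single_eq_of_ne h, Pi.single_apply]
  have hw : w = ∑ k : Fin M, ∑ i, w k i • (Pi.single k (Pi.single i 1) : Fin M → Fin n → ℝ) := by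
    conv_lhs => rw [← Finset.univ_sum_single w]
    exact Finset.sum_congr rfl fun k _ => hsingle k (w k)
  conv_lhs => rw [hw]
  rw [map_sum]
  refine Finset.sum_congr rfl fun k _ => ?_
  rw [map_sum]
  exact Finset.sum_congr rfl fun i _ => by rw [_root_.map_smul, smul_eq_mul]

/-- The reverse-mode (discrete adjoint / backpropagation) recursion computes the exact
gradient of a differentiable loss `L(u¹, …, u^M)` through an explicit one-step scheme
`u^{m+1} = g_m(u^m, θ)`: with adjoints defined backwards by `λ_M = (∂L/∂u^M)ᵀ` and
`λ_m = (∂g_m/∂u)ᵀ λ_{m+1} + (∂L/∂u^m)ᵀ`, the map `θ ↦ L(u¹(θ), …, u^M(θ))` is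
differentiable with gradient `Σ_{m=0}^{M−1} (∂g_m/∂θ)ᵀ λ_{m+1}`. -/
theorem reverse_mode_discrete_adjoint_gradient
    (n p M : ℕ) (hM : 0 < M)
    (g : ℕ → (Fin n → ℝ) → (Fin p → ℝ) → (Fin n → ℝ))
    (hg : ∀ m < M, Differentiable ℝ (fun q : (Fin n → ℝ) × (Fin p → ℝ) => g m q.1 q.2))
    (u0 : Fin n → ℝ) (θ : Fin p → ℝ)
    (L : (Fin M → Fin n → ℝ) → ℝ)
    (hL : Differentiable ℝ L)
    -- the adjoint vectors: `lam k` is `λ_{k+1}`, i.e. the adjoint of `u^{k+1}`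
    (lam : Fin M → Fin n → ℝ)
    (hlamM : ∀ i, lam ⟨M - 1, by omega⟩ i
      = fderiv ℝ L (fun j : Fin M => solverIterate n p g u0 θ ((j : ℕ) + 1))
          (Pi.single (⟨M - 1, by omega⟩ : Fin M) (Pi.single i 1 : Fin n → ℝ)))
    (hlamRec : ∀ k : Fin M, ∀ hk : (k : ℕ) + 1 < M, ∀ i,
      lam k i
        = lam ⟨(k : ℕ) + 1, hk⟩ ⬝ᵥ
            (fderiv ℝ (fun v => g ((k : ℕ) + 1) v θ)
              (solverIterate n p g u0 θ ((k : ℕ) + 1)) (Pi.single i 1 : Fin n → ℝ))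
          + fderiv ℝ L (fun j : Fin M => solverIterate n p g u0 θ ((j : ℕ) + 1))
              (Pi.single k (Pi.single i 1 : Fin n → ℝ))) :
    Differentiable ℝ
        (fun θ' => L (fun j : Fin M => solverIterate n p g u0 θ' ((j : ℕ) + 1)))
      ∧ ∀ jp : Fin p,
          fderiv ℝ (fun θ' => L (fun j : Fin M => solverIterate n p g u0 θ' ((j : ℕ) + 1)))
              θ (Pi.single jp 1 : Fin p → ℝ)
            = ∑ k : Fin M, lam k ⬝ᵥ
                (fderiv ℝ (fun θ' => g (k : ℕ) (solverIterate n p g u0 θ (k : ℕ)) θ') θ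
                  (Pi.single jp 1 : Fin p → ℝ)) := by
  classical
  have hdiff := solver_diff n p M g u0 hg
  have hPhi : Differentiable ℝ
      (fun θ' => fun j : Fin M => solverIterate n p g u0 θ' ((j : ℕ) + 1)) :=
    differentiable_pi.mpr fun j => hdiff ((j : ℕ) + 1) (by omega)
  have hdiffL : Differentiable ℝ
      (fun θ' => L (fun j : Fin M => solverIterate n p g u0 θ' ((j : ℕ) + 1))) :=
    hL.comp hPhi
  refine ⟨hdiffL, ?_⟩
  intro jp
  -- notation
  set e : Fin p → ℝ := (Pi.single jp 1 : Fin p → ℝ) with he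
  set pt : Fin M → Fin n → ℝ := fun j : Fin M => solverIterate n p g u0 θ ((j : ℕ) + 1)
    with hptdef
  -- chain rule through the trajectory map
  have hchain :
      fderiv ℝ (fun θ' => L (fun j : Fin M => solverIterate n p g u0 θ' ((j : ℕ) + 1))) θ e
        = fderiv ℝ L pt
            ((fderiv ℝ (fun θ' => fun j : Fin M => solverIterate n p g u0 θ' ((j : ℕ) + 1)) θ) e) := by
    have h := fderiv_comp (g := L)
      (f := fun θ' => fun j : Fin M => solverIterate n p g u0 θ' ((j : ℕ) + 1))
      θ (hL pt) (hPhi θ)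
    have : (fun θ' => L (fun j : Fin M => solverIterate n p g u0 θ' ((j : ℕ) + 1)))
        = L ∘ (fun θ' => fun j : Fin M => solverIterate n p g u0 θ' ((j : ℕ) + 1)) := rfl
    rw [this, h]
    rfl
  have hpi : ∀ j : Fin M,
      ((fderiv ℝ (fun θ' => fun j : Fin M => solverIterate n p g u0 θ' ((j : ℕ) + 1)) θ) e) j
        = fderiv ℝ (fun θ' => solverIterate n p g u0 θ' ((j : ℕ) + 1)) θ e := by
    intro j
    rw [fderiv_pi (fun j : Fin M => hdiff ((j : ℕ) + 1) (by omega) θ)]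
    rfl
  -- ℕ-indexed data for the telescoping identity
  set lam' : ℕ → Fin n → ℝ := fun m => if h : m < M then lam ⟨m, h⟩ else 0 with hlam'
  set ell : ℕ → Fin n → ℝ := fun m =>
    if h : m < M then
      (fun i => fderiv ℝ L pt (Pi.single (⟨m, h⟩ : Fin M) (Pi.single i 1 : Fin n → ℝ)))
    else 0 with hell
  set v : ℕ → Fin n → ℝ :=
    fun m => fderiv ℝ (fun θ' => solverIterate n p g u0 θ' m) θ e with hv
  set b : ℕ → Fin n → ℝ :=
    fun m => fderiv ℝ (fun t => g m (solverIterate n p g u0 θ m) t) θ e with hb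
  set A : ℕ → ((Fin n → ℝ) →L[ℝ] (Fin n → ℝ)) :=
    fun m => fderiv ℝ (fun z => g m z θ) (solverIterate n p g u0 θ m) with hA
  have hv0 : v 0 = 0 := by
    have hzero : (fun θ' : Fin p → ℝ => solverIterate n p g u0 θ' 0) = fun _ => u0 := by
      funext θ'; simp [solverIterate]
    simp only [hv, hzero, fderiv_fun_const]
    rfl
  have hvrec : ∀ m, m < M → v (m + 1) = A m (v m) + b m := by
    intro m hm
    exact solver_fderiv_rec n p M g u0 θ hg m hm e
  have hlrec : ∀ k, k + 1 < M → ∀ i,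
      lam' k i = lam' (k + 1) ⬝ᵥ A (k + 1) (Pi.single i 1) + ell k i := by
    intro k hk i
    have hkM : k < M := by omega
    have h := hlamRec ⟨k, hkM⟩ hk i
    simp only [hlam', hell, hA, dif_pos hkM, dif_pos hk]
    exact h
  have key := adjoint_telescope n M lam' ell v b A hv0 hvrec hlrec (M - 1) (by omega)
  have hM1 : M - 1 + 1 = M := by omega
  rw [hM1] at key
  -- lam' (M-1) = ell (M-1)
  have hlamtop : lam' (M - 1) = ell (M - 1) := by
    funext i
    have hM1' : M - 1 < M := by omega
    simp only [hlam', hell, dif_pos hM1']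
    exact hlamM i
  -- turn `key` into the clean identity
  have key2 : ∑ m ∈ Finset.range M, ell m ⬝ᵥ v (m + 1)
      = ∑ m ∈ Finset.range M, lam' m ⬝ᵥ b m := by
    have hsplit : ∑ m ∈ Finset.range M, ell m ⬝ᵥ v (m + 1)
        = ∑ m ∈ Finset.range (M - 1), ell m ⬝ᵥ v (m + 1) + ell (M - 1) ⬝ᵥ v (M - 1 + 1) := by
      rw [← Finset.sum_range_succ (f := fun m => ell m ⬝ᵥ v (m + 1)) (n := M - 1), hM1]
    rw [hsplit, hM1, ← hlamtop]
    rw [← key]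
    ring
  -- compute the left-hand side of the goal
  have hLHS :
      fderiv ℝ (fun θ' => L (fun j : Fin M => solverIterate n p g u0 θ' ((j : ℕ) + 1))) θ e
        = ∑ m ∈ Finset.range M, ell m ⬝ᵥ v (m + 1) := by
    rw [hchain, fderiv_L_expand]
    rw [← Fin.sum_univ_eq_sum_range (fun m => ell m ⬝ᵥ v (m + 1)) M]
    refine Finset.sum_congr rfl fun k _ => ?_
    have hkM : (k : ℕ) < M := k.isLt
    have hdot : ell (k : ℕ) ⬝ᵥ v ((k : ℕ) + 1)
        = ∑ i, ell (k : ℕ) i * v ((k : ℕ) + 1) i := rfl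
    rw [hdot]
    refine Finset.sum_congr rfl fun i _ => ?_
    rw [hpi k]
    simp only [hell, dif_pos hkM, Fin.eta]
    ring
  -- compute the right-hand side of the goal
  have hRHS : ∑ k : Fin M, lam k ⬝ᵥ
        (fderiv ℝ (fun θ' => g (k : ℕ) (solverIterate n p g u0 θ (k : ℕ)) θ') θ e)
      = ∑ m ∈ Finset.range M, lam' m ⬝ᵥ b m := by
    rw [← Fin.sum_univ_eq_sum_range (fun m => lam' m ⬝ᵥ b m) M]
    refine Finset.sum_congr rfl fun k _ => ?_
    have hkM : (k : ℕ) < M := k.isLt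
    simp only [hlam', hb, dif_pos hkM, Fin.eta]
  rw [hLHS, key2, ← hRHS]
end

section
/- Let f : ℝ^n × ℝ^p × ℝ → ℝ^n be continuously differentiable and fix an explicit σ-stage Runge–Kutta scheme with coefficients a_{ij} (1 ≤ i, j ≤ σ, with a_{ij} = 0 for j ≥ i), weights b_i, nodes c_i, stepsize Δt > 0 and time t_m. Let u^m : ℝ^p → ℝ^n be differentiable with derivative s^m := D_θ u^m(θ), define the stages k_i(θ) = f( u^m(θ) + Σ_{j<i} a_{ij} k_j(θ), θ, t_m + c_i Δt ) for i = 1, …, σ, and u^{m+1}(θ) = u^m(θ) + Δt Σ_{i=1}^σ b_i k_i(θ). Then each k_i is differentiable, and its derivative k̇_i := D_θ k_i(θ) ∈ ℝ^{n×p} satisfies k̇_i = (∂f/∂u)( u^m + Σ_{j<i} a_{ij} k_j, θ, t_m + c_i Δt ) ( s^m + Σ_{j<i} a_{ij} k̇_j ) + (∂f/∂θ)( u^m + Σ_{j<i} a_{ij} k_j, θ, t_m + c_i Δt ), and D_θ u^{m+1}(θ) = s^m + Δt Σ_{i=1}^σ b_i k̇_i; that is, forward-mode differentiation of the explicit Runge–Kutta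 step yields exactly the same Runge–Kutta scheme applied to the forward sensitivity equation. -/
open Matrix

noncomputable def rkStage (n p : ℕ)
    (f : (Fin n → ℝ) → (Fin p → ℝ) → ℝ → (Fin n → ℝ))
    (a : ℕ → ℕ → ℝ) (c : ℕ → ℝ) (Δt tm : ℝ)
    (um : (Fin p → ℝ) → (Fin n → ℝ)) (θ : Fin p → ℝ) : ℕ → (Fin n → ℝ)
  | i => f (um θ + ∑ j ∈ (Finset.range i).attach,
        a i (j : ℕ) • rkStage n p f a c Δt tm um θ (j : ℕ)) θ (tm + c i * Δt)
  termination_by i => i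
  decreasing_by exact Finset.mem_range.mp j.2

lemma rkStage_def (n p : ℕ)
    (f : (Fin n → ℝ) → (Fin p → ℝ) → ℝ → (Fin n → ℝ))
    (a : ℕ → ℕ → ℝ) (c : ℕ → ℝ) (Δt tm : ℝ)
    (um : (Fin p → ℝ) → (Fin n → ℝ)) (θ : Fin p → ℝ) (i : ℕ) :
    rkStage n p f a c Δt tm um θ i
      = f (um θ + ∑ j ∈ Finset.range i, a i j • rkStage n p f a c Δt tm um θ j) θ
          (tm + c i * Δt) := by
  rw [rkStage, ← Finset.sum_attach (Finset.range i)
    (fun j => a i j • rkStage n p f a c Δt tm um θ j)]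

lemma hasFDerivAt_partial_decomp
    {X E Y : Type*} [NormedAddCommGroup X] [NormedSpace ℝ X]
    [NormedAddCommGroup E] [NormedSpace ℝ E]
    [NormedAddCommGroup Y] [NormedSpace ℝ Y]
    (F : X × E × ℝ → Y) (hF : Differentiable ℝ F)
    (g : E → X) (G : E →L[ℝ] X) (θ : E) (hG : HasFDerivAt g G θ) (t : ℝ) :
    HasFDerivAt (fun θ' => F (g θ', θ', t))
      (((fderiv ℝ (fun v => F (v, θ, t)) (g θ)).comp G)
        + fderiv ℝ (fun θ' => F (g θ, θ', t)) θ) θ := by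
  have hφ : HasFDerivAt (fun θ' => ((g θ', θ', t) : X × E × ℝ))
      (G.prod ((ContinuousLinearMap.id ℝ E).prod 0)) θ :=
    HasFDerivAt.prodMk hG (HasFDerivAt.prodMk (hasFDerivAt_id θ) (hasFDerivAt_const t θ))
  have h1 : HasFDerivAt (fun θ' => F (g θ', θ', t))
      ((fderiv ℝ F (g θ, θ, t)).comp (G.prod ((ContinuousLinearMap.id ℝ E).prod 0))) θ :=
    ((hF (g θ, θ, t)).hasFDerivAt).comp θ hφ
  have hu : HasFDerivAt (fun v => F (v, θ, t))
      ((fderiv ℝ F (g θ, θ, t)).comp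
        ((ContinuousLinearMap.id ℝ X).prod 0)) (g θ) :=
    ((hF (g θ, θ, t)).hasFDerivAt).comp (g θ)
      (HasFDerivAt.prodMk (hasFDerivAt_id (g θ)) (hasFDerivAt_const (θ, t) (g θ)))
  have hθ : HasFDerivAt (fun θ' => F (g θ, θ', t))
      ((fderiv ℝ F (g θ, θ, t)).comp
        ((0 : E →L[ℝ] X).prod ((ContinuousLinearMap.id ℝ E).prod 0))) θ :=
    ((hF (g θ, θ, t)).hasFDerivAt).comp θ
      (HasFDerivAt.prodMk (hasFDerivAt_const (g θ) θ) (HasFDerivAt.prodMk (hasFDerivAt_id θ) (hasFDerivAt_const t θ)))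
  rw [hu.fderiv, hθ.fderiv]
  convert h1 using 1
  ext w
  simp only [ContinuousLinearMap.add_apply, ContinuousLinearMap.comp_apply,
    ContinuousLinearMap.prod_apply, ContinuousLinearMap.id_apply,
    ContinuousLinearMap.zero_apply]
  rw [← map_add]
  simp [Prod.mk_add_mk]

/-- Forward-mode differentiation of an explicit Runge–Kutta step yields exactly the same
Runge–Kutta scheme applied to the forward sensitivity equation: every stage `k_i` is
differentiable in `θ`, its derivative `k̇_i` satisfies
`k̇_i = (∂f/∂u)(u^m + Σ_{j<i} a_{ij} k_j, θ, t_m + c_i Δt)(s^m + Σ_{j<i} a_{ij} k̇_j)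
      + (∂f/∂θ)(u^m + Σ_{j<i} a_{ij} k_j, θ, t_m + c_i Δt)`,
and `D_θ u^{m+1}(θ) = s^m + Δt Σ_i b_i k̇_i`. -/
theorem forward_AD_runge_kutta_consistency
    (n p σ : ℕ)
    (f : (Fin n → ℝ) → (Fin p → ℝ) → ℝ → (Fin n → ℝ))
    (hf : ContDiff ℝ 1 (fun q : (Fin n → ℝ) × (Fin p → ℝ) × ℝ => f q.1 q.2.1 q.2.2))
    (a : ℕ → ℕ → ℝ) (b : ℕ → ℝ) (c : ℕ → ℝ) (Δt : ℝ) (hΔt : 0 < Δt) (tm : ℝ)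
    (um : (Fin p → ℝ) → (Fin n → ℝ)) (hum : Differentiable ℝ um) (θ : Fin p → ℝ) :
    (∀ i : ℕ, DifferentiableAt ℝ (fun θ' => rkStage n p f a c Δt tm um θ' i) θ)
      ∧ (∀ i : ℕ,
          fderiv ℝ (fun θ' => rkStage n p f a c Δt tm um θ' i) θ
            = ((fderiv ℝ (fun v => f v θ (tm + c i * Δt))
                  (um θ + ∑ j ∈ Finset.range i,
                    a i j • rkStage n p f a c Δt tm um θ j)).comp
                (fderiv ℝ um θ + ∑ j ∈ Finset.range i,
                  a i j • fderiv ℝ (fun θ' => rkStage n p f a c Δt tm um θ' j) θ))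
              + fderiv ℝ
                  (fun θ' => f (um θ + ∑ j ∈ Finset.range i,
                    a i j • rkStage n p f a c Δt tm um θ j) θ' (tm + c i * Δt)) θ)
      ∧ fderiv ℝ (fun θ' => um θ'
            + Δt • ∑ i ∈ Finset.range σ, b i • rkStage n p f a c Δt tm um θ' i) θ
          = fderiv ℝ um θ
            + Δt • ∑ i ∈ Finset.range σ,
                b i • fderiv ℝ (fun θ' => rkStage n p f a c Δt tm um θ' i) θ := by
  have hF : Differentiable ℝ (fun q : (Fin n → ℝ) × (Fin p → ℝ) × ℝ => f q.1 q.2.1 q.2.2) :=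
    hf.differentiable one_ne_zero
  have key : ∀ i : ℕ,
      DifferentiableAt ℝ (fun θ' => rkStage n p f a c Δt tm um θ' i) θ ∧
      fderiv ℝ (fun θ' => rkStage n p f a c Δt tm um θ' i) θ
        = ((fderiv ℝ (fun v => f v θ (tm + c i * Δt))
              (um θ + ∑ j ∈ Finset.range i,
                a i j • rkStage n p f a c Δt tm um θ j)).comp
            (fderiv ℝ um θ + ∑ j ∈ Finset.range i,
              a i j • fderiv ℝ (fun θ' => rkStage n p f a c Δt tm um θ' j) θ))
          + fderiv ℝ
              (fun θ' => f (um θ + ∑ j ∈ Finset.range i,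
                a i j • rkStage n p f a c Δt tm um θ j) θ' (tm + c i * Δt)) θ := by
    intro i
    induction i using Nat.strong_induction_on with
    | _ i ih =>
      set g : (Fin p → ℝ) → (Fin n → ℝ) :=
        fun θ' => um θ' + ∑ j ∈ Finset.range i, a i j • rkStage n p f a c Δt tm um θ' j
        with hgdef
      set G : (Fin p → ℝ) →L[ℝ] (Fin n → ℝ) :=
        fderiv ℝ um θ + ∑ j ∈ Finset.range i,
          a i j • fderiv ℝ (fun θ' => rkStage n p f a c Δt tm um θ' j) θ with hGdef
      have hG : HasFDerivAt g G θ := by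
        apply (hum θ).hasFDerivAt.add
        apply HasFDerivAt.fun_sum
        intro j hj
        exact ((ih j (Finset.mem_range.mp hj)).1.hasFDerivAt).const_smul (a i j)
      have heq : (fun θ' => rkStage n p f a c Δt tm um θ' i)
          = fun θ' => (fun q : (Fin n → ℝ) × (Fin p → ℝ) × ℝ => f q.1 q.2.1 q.2.2)
              (g θ', θ', tm + c i * Δt) := by
        funext θ'
        exact rkStage_def n p f a c Δt tm um θ' i
      have hmain := hasFDerivAt_partial_decomp
        (fun q : (Fin n → ℝ) × (Fin p → ℝ) × ℝ => f q.1 q.2.1 q.2.2) hF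
        g G θ hG (tm + c i * Δt)
      rw [← heq] at hmain
      exact ⟨hmain.differentiableAt, hmain.fderiv⟩
  refine ⟨fun i => (key i).1, fun i => (key i).2, ?_⟩
  have hsum : HasFDerivAt
      (fun θ' => um θ' + Δt • ∑ i ∈ Finset.range σ, b i • rkStage n p f a c Δt tm um θ' i)
      (fderiv ℝ um θ + Δt • ∑ i ∈ Finset.range σ,
        b i • fderiv ℝ (fun θ' => rkStage n p f a c Δt tm um θ' i) θ) θ := by
    apply (hum θ).hasFDerivAt.add
    apply HasFDerivAt.const_smul _ Δt
    apply HasFDerivAt.fun_sum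
    intro i _
    exact ((key i).1.hasFDerivAt).const_smul (b i)
  exact hsum.fderiv
end
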